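/- Let m ∈ (0,1), β > 1 with β < 2−m, r > 0, and let φ : (z₀, ∞) → (0,∞) be a decreasing C² solution of the self-similar ODE with φ(z) ≤ K·z^{−2/(1−m)} for large z (for some K>0) and z φ(z) → 0 as z → +∞. Then (φ^m)'(z) → 0 as z → +∞, and moreover for large z one has the bound 0 > m φ(z)^{m−1} φ'(z) ≥ −c₂ z φ(z), where c₂ = (β−m)/(2(β−1)). In particular |φ'(z)| ≤ (c₂/m) z φ(z)^{2−m} for large z. -/

import Mathlib

open Real Set Filter

theorem tail_derivative_estimates
    (m β r z₀ : ℝ) (hm0 : 0 < m) (hm1 : m < 1) (hβ : 1 < β) (hβm : β < 2 - m)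
    (hr : 0 < r) (hz₀ : 0 < z₀)
    (φ : ℝ → ℝ) (hφ : ContDiff ℝ 2 φ)
    (hpos : ∀ z ∈ Ioi z₀, 0 < φ z)
    (hdec : StrictAntiOn φ (Ioi z₀))
    (hODE : ∀ z ∈ Ioi z₀, -(1/(β-1)) * (φ z + ((β - m)/2) * z * deriv φ z)
      = deriv (deriv (fun y => φ y ^ m)) z + r * φ z ^ β)
    (K : ℝ) (hK : 0 < K)
    (hdecay : ∃ Z, ∀ z ≥ Z, φ z ≤ K * z ^ (-(2/(1-m))))
    (hzφ : Tendsto (fun z => z * φ z) atTop (nhds 0)) :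
    Tendsto (deriv (fun z => φ z ^ m)) atTop (nhds 0) ∧
    ∃ Z, ∀ z ≥ Z,
      m * φ z ^ (m-1) * deriv φ z < 0 ∧
      -(((β - m)/(2*(β-1))) * z * φ z) ≤ m * φ z ^ (m-1) * deriv φ z ∧
      |deriv φ z| ≤ (((β - m)/(2*(β-1)))/m) * z * φ z ^ (2-m) := by
  have hβ1 : 0 < β - 1 := by linarith
  set c₂ : ℝ := (β - m)/(2*(β-1)) with hc₂def
  have hc₂ : 0 < c₂ := by apply div_pos <;> linarith
  set ψ : ℝ → ℝ := fun y => φ y ^ m with hψdef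
  have hφdiff : Differentiable ℝ φ := hφ.differentiable (by norm_num)
  have hφcont : Continuous φ := hφdiff.continuous
  set U : Set ℝ := φ ⁻¹' (Ioi 0) with hUdef
  have hUopen : IsOpen U := isOpen_Ioi.preimage hφcont
  have hsub : Ioi z₀ ⊆ U := fun z hz => hpos z hz
  have hUpos : ∀ z ∈ U, 0 < φ z := fun z hz => hz
  -- first derivative of ψ
  have hψ' : ∀ z ∈ U, HasDerivAt ψ (m * φ z ^ (m-1) * deriv φ z) z := by
    intro z hz
    have h := ((hφdiff z).hasDerivAt).rpow_const (p := m) (Or.inl (ne_of_gt (hUpos z hz)))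
    convert h using 1
    ring
  have hψ'eq : ∀ z ∈ U, deriv ψ z = m * φ z ^ (m-1) * deriv φ z :=
    fun z hz => (hψ' z hz).deriv
  -- ψ is C² on U, so deriv ψ is differentiable on U
  have hψC2 : ContDiffOn ℝ 2 ψ U :=
    (hφ.contDiffOn).rpow_const_of_ne (fun z hz => ne_of_gt (hUpos z hz))
  have hdψC1 : ContDiffOn ℝ 1 (deriv ψ) U :=
    hψC2.deriv_of_isOpen hUopen (m := 1) (by norm_num)
  have hdψ : ∀ z ∈ U, DifferentiableAt ℝ (deriv ψ) z := fun z hz =>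
    (hdψC1.differentiableOn (by norm_num)).differentiableAt (hUopen.mem_nhds hz)
  -- φ' ≤ 0 on Ioi z₀
  have hφ'le : ∀ z ∈ Ioi z₀, deriv φ z ≤ 0 := by
    intro z hz
    have ht : Tendsto (slope φ z) (nhdsWithin z {z}ᶜ) (nhds (deriv φ z)) :=
      hasDerivAt_iff_tendsto_slope.mp (hφdiff z).hasDerivAt
    refine le_of_tendsto ht ?_
    have hmem : {z}ᶜ ∩ Ioi z₀ ∈ nhdsWithin z {z}ᶜ :=
      inter_mem_nhdsWithin _ (isOpen_Ioi.mem_nhds hz)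
    filter_upwards [hmem] with y hy
    obtain ⟨hy2, hy1⟩ := hy
    rcases lt_or_gt_of_ne (hy2 : y ≠ z) with h | h
    · have h1 : φ z < φ y := hdec hy1 hz h
      rw [slope_def_field]
      exact div_nonpos_of_nonneg_of_nonpos (by linarith) (by linarith)
    · have h1 : φ y < φ z := hdec hz hy1 h
      rw [slope_def_field]
      exact div_nonpos_of_nonpos_of_nonneg (by linarith) (by linarith)
  have hψ'le : ∀ z ∈ Ioi z₀, deriv ψ z ≤ 0 := by
    intro z hz
    rw [hψ'eq z (hsub hz)]
    have h1 : (0:ℝ) < φ z ^ (m-1) := rpow_pos_of_pos (hpos z hz) _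
    have h2 := hφ'le z hz
    nlinarith [mul_le_mul_of_nonneg_left h2 (mul_nonneg hm0.le h1.le)]
  -- the function F
  set F : ℝ → ℝ := fun z => deriv ψ z + c₂ * (z * φ z) with hFdef
  have hFderiv : ∀ z ∈ Ioi z₀, HasDerivAt F
      (deriv (deriv ψ) z + c₂ * (1 * φ z + z * deriv φ z)) z := by
    intro z hz
    exact ((hdψ z (hsub hz)).hasDerivAt).add
      (((hasDerivAt_id z).mul (hφdiff z).hasDerivAt).const_mul c₂)
  have hODE' : ∀ z ∈ Ioi z₀, deriv (deriv ψ) z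
      = -(1/(β-1)) * (φ z + ((β - m)/2) * z * deriv φ z) - r * φ z ^ β := by
    intro z hz
    have h := hODE z hz
    linarith
  have hFderiv_neg : ∀ z ∈ Ioi z₀, deriv F z ≤ 0 := by
    intro z hz
    rw [(hFderiv z hz).deriv, hODE' z hz]
    have hφz := hpos z hz
    have hφβ : 0 < φ z ^ β := rpow_pos_of_pos hφz β
    have hkey : c₂ * (1 * φ z + z * deriv φ z)
        - (1/(β-1)) * (φ z + ((β - m)/2) * z * deriv φ z)
        = -((2 - β + m)/(2*(β-1))) * φ z := by
      rw [hc₂def]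
      field_simp
      ring
    have hc1 : 0 < (2 - β + m)/(2*(β-1)) := by apply div_pos <;> linarith
    nlinarith
  have hFanti : AntitoneOn F (Ioi z₀) := by
    apply antitoneOn_of_deriv_nonpos (convex_Ioi z₀)
    · exact fun z hz => ((hFderiv z hz).differentiableAt.continuousAt).continuousWithinAt
    · rw [interior_Ioi]
      exact fun z hz => (hFderiv z hz).differentiableAt.differentiableWithinAt
    · rw [interior_Ioi]
      exact hFderiv_neg
  -- F ≥ 0 on Ioi z₀
  have hFnonneg : ∀ z ∈ Ioi z₀, 0 ≤ F z := by
    intro z₁ hz₁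
    by_contra hneg
    push_neg at hneg
    have hbound : ∀ y ∈ Ioi z₁, deriv ψ y ≤ F z₁ := by
      intro y hy
      have hy' : y ∈ Ioi z₀ := mem_Ioi.mpr (lt_trans (hz₁ : z₀ < z₁) (hy : z₁ < y))
      have h1 : F y ≤ F z₁ := hFanti hz₁ hy' (le_of_lt hy)
      have hyz : (0:ℝ) < y := lt_trans hz₀ hy'
      have h2 : 0 ≤ c₂ * (y * φ y) := by
        have := hpos y hy'
        positivity
      have h3 : deriv ψ y = F y - c₂ * (y * φ y) := by simp [hFdef]
      linarith
    set g : ℝ → ℝ := fun z => ψ z - F z₁ * z with hgdef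
    have hgd : ∀ z ∈ Ioi z₀, HasDerivAt g (m * φ z ^ (m-1) * deriv φ z - F z₁ * 1) z :=
      fun z hz => (hψ' z (hsub hz)).sub ((hasDerivAt_id z).const_mul (F z₁))
    have hganti : AntitoneOn g (Ici z₁) := by
      apply antitoneOn_of_deriv_nonpos (convex_Ici z₁)
      · intro z hz
        exact ((hgd z (mem_Ioi.mpr (lt_of_lt_of_le (hz₁ : z₀ < z₁) (hz : z₁ ≤ z)))).differentiableAt.continuousAt).continuousWithinAt
      · rw [interior_Ici]
        exact fun z hz =>
          (hgd z (mem_Ioi.mpr (lt_trans (hz₁ : z₀ < z₁) (hz : z₁ < z)))).differentiableAt.differentiableWithinAt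
      · rw [interior_Ici]
        intro z hz
        have hz' : z ∈ Ioi z₀ := mem_Ioi.mpr (lt_trans (hz₁ : z₀ < z₁) (hz : z₁ < z))
        rw [(hgd z hz').deriv]
        have h1 := hbound z hz
        rw [hψ'eq z (hsub hz')] at h1
        linarith
    set z₂ : ℝ := z₁ + (ψ z₁ + 1) / (-F z₁) with hz₂def
    have hψz₁pos : 0 < ψ z₁ := rpow_pos_of_pos (hpos z₁ hz₁) m
    have hz₂gt : z₁ < z₂ := by
      have h : 0 < (ψ z₁ + 1) / (-F z₁) := by apply div_pos <;> linarith
      rw [hz₂def]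
      linarith
    have hle : g z₂ ≤ g z₁ := hganti self_mem_Ici (le_of_lt hz₂gt) (le_of_lt hz₂gt)
    have hFne : F z₁ ≠ 0 := ne_of_lt hneg
    have hcalc : F z₁ * ((ψ z₁ + 1) / (-F z₁)) = -(ψ z₁ + 1) := by
      rw [div_neg, mul_neg, mul_div_assoc', mul_div_cancel_left₀ _ hFne]
    have hψz₂pos : 0 < ψ z₂ := rpow_pos_of_pos (hpos z₂ (lt_trans hz₁ hz₂gt)) m
    have hgz₂ : g z₂ = ψ z₂ - F z₁ * z₁ - F z₁ * ((ψ z₁ + 1) / (-F z₁)) := by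
      simp only [hgdef, hz₂def]
      ring
    have hgz₁ : g z₁ = ψ z₁ - F z₁ * z₁ := rfl
    rw [hgz₂, hgz₁, hcalc] at hle
    linarith
  have hlow : ∀ z ∈ Ioi z₀, -(c₂ * (z * φ z)) ≤ deriv ψ z := by
    intro z hz
    have h := hFnonneg z hz
    simp only [hFdef] at h
    linarith
  -- strict negativity of deriv ψ
  have hstrict : ∀ z ∈ Ioi z₀, deriv ψ z < 0 := by
    intro z hz
    rcases (hψ'le z hz).lt_or_eq with h | h
    · exact h
    exfalso
    have hφ'z : deriv φ z = 0 := by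
      have h1 := hψ'eq z (hsub hz)
      rw [h1] at h
      have h2 : (0:ℝ) < φ z ^ (m-1) := rpow_pos_of_pos (hpos z hz) _
      have h3 : m * φ z ^ (m-1) ≠ 0 := by positivity
      rcases mul_eq_zero.mp h with h4 | h4
      · exact absurd h4 h3
      · exact h4
    have hmax : IsLocalMax (deriv ψ) z := by
      have : ∀ᶠ y in nhds z, deriv ψ y ≤ deriv ψ z := by
        filter_upwards [isOpen_Ioi.mem_nhds hz] with y hy
        rw [h]
        exact hψ'le y hy
      exact this
    have h0 : deriv (deriv ψ) z = 0 := hmax.deriv_eq_zero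
    have hODEz := hODE' z hz
    rw [h0, hφ'z] at hODEz
    have hφz := hpos z hz
    have hφβ : 0 < φ z ^ β := rpow_pos_of_pos hφz β
    have h1 : 0 < 1/(β-1) := by positivity
    nlinarith
  constructor
  · -- squeeze
    have hlowT : Tendsto (fun z => -(c₂ * (z * φ z))) atTop (nhds 0) := by
      have := (hzφ.const_mul c₂).neg
      simpa using this
    refine tendsto_of_tendsto_of_tendsto_of_le_of_le' hlowT tendsto_const_nhds ?_ ?_
    · filter_upwards [eventually_gt_atTop z₀] with z hz
      exact hlow z hz
    · filter_upwards [eventually_gt_atTop z₀] with z hz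
      exact hψ'le z hz
  · refine ⟨z₀ + 1, fun z hz => ?_⟩
    have hz' : z ∈ Ioi z₀ := by simp only [mem_Ioi]; linarith
    have hzU : z ∈ U := hsub hz'
    have hφz := hpos z hz'
    have hzpos : (0:ℝ) < z := lt_trans hz₀ hz'
    have heq := hψ'eq z hzU
    refine ⟨?_, ?_, ?_⟩
    · rw [← heq]; exact hstrict z hz'
    · have h := hlow z hz'
      rw [heq] at h
      linarith [h]
    · have hA : (0:ℝ) < φ z ^ (m-1) := rpow_pos_of_pos hφz _
      have hB : (0:ℝ) < φ z ^ (2-m) := rpow_pos_of_pos hφz _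
      have hAB : φ z ^ (m-1) * φ z ^ (2-m) = φ z := by
        rw [← rpow_add hφz]
        norm_num
      have hφ'neg : deriv φ z < 0 := by
        by_contra hc
        push_neg at hc
        have h1 := hstrict z hz'
        rw [heq] at h1
        nlinarith [mul_nonneg (mul_nonneg hm0.le hA.le) hc]
      rw [abs_of_neg hφ'neg]
      have hmA : (0:ℝ) < m * φ z ^ (m-1) := by positivity
      have key : m * φ z ^ (m-1) * (-deriv φ z)
          ≤ m * φ z ^ (m-1) * (c₂/m * z * φ z ^ (2-m)) := by
        have hm' : m ≠ 0 := ne_of_gt hm0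
        have h2 : m * φ z ^ (m-1) * (c₂/m * z * φ z ^ (2-m)) = c₂ * (z * φ z) := by
          calc m * φ z ^ (m-1) * (c₂/m * z * φ z ^ (2-m))
              = (m * (c₂/m)) * (z * (φ z ^ (m-1) * φ z ^ (2-m))) := by ring
            _ = c₂ * (z * φ z) := by rw [mul_div_assoc', mul_div_cancel_left₀ _ hm', hAB]
        rw [h2]
        have h3 := hlow z hz'
        rw [heq] at h3
        linarith
      exact le_of_mul_le_mul_left (by linarith [key]) hmA
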